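/- arXiv:2408.07935 — 2 statements merged into one kernel-verified Lean document; each statement's English description precedes it below -/
import Mathlib

section
/- For all positive real numbers α, β, σ, one has β²(1 + ln₊ σ) ≤ (1/2)α²σ² + β²(1 + ln₊(β/α)), where ln₊ a := max{ln a, 0}. -/
open Real

/-- For all positive reals α, β, σ: β²(1 + ln₊ σ) ≤ (1/2)α²σ² + β²(1 + ln₊(β/α)),
where ln₊ a = max (ln a) 0. -/
theorem stmt0 (α β σ : ℝ) (hα : 0 < α) (hβ : 0 < β) (hσ : 0 < σ) :
    β ^ 2 * (1 + max (Real.log σ) 0) ≤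
      (1 / 2) * α ^ 2 * σ ^ 2 + β ^ 2 * (1 + max (Real.log (β / α)) 0) := by
  set t := α * σ / β with ht
  have htpos : 0 < t := by positivity
  have hlogt : Real.log t ≤ t ^ 2 / 2 := by
    have h1 := Real.log_le_sub_one_of_pos htpos
    nlinarith [sq_nonneg (t - 1)]
  have hmaxt : max (Real.log t) 0 ≤ t ^ 2 / 2 := by
    apply max_le hlogt; positivity
  have hsplit : Real.log σ = Real.log (β / α) + Real.log t := by
    rw [← Real.log_mul (by positivity) (by positivity)]
    congr 1
    rw [ht]
    field_simp
  have h2 : max (Real.log σ) 0 ≤ max (Real.log (β / α)) 0 + max (Real.log t) 0 := by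
    apply max_le
    · rw [hsplit]
      exact add_le_add (le_max_left _ _) (le_max_left _ _)
    · positivity
  have ht2 : β ^ 2 * (t ^ 2 / 2) = (1 / 2) * α ^ 2 * σ ^ 2 := by
    rw [ht]; field_simp
  nlinarith [mul_le_mul_of_nonneg_left h2 (by positivity : (0:ℝ) ≤ β ^ 2),
    mul_le_mul_of_nonneg_left hmaxt (by positivity : (0:ℝ) ≤ β ^ 2)]
end

section
/- There exists a constant C > 0, independent of α, β, σ, such that for all positive reals α, β, σ: β² ln(e + σ) ≤ C α² σ² + C β² ln(e + β/α). -/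
open Real

/-- There is a constant C > 0, independent of α, β, σ, such that for all positive reals,
β² ln(e + σ) ≤ C α² σ² + C β² ln(e + β/α). -/
theorem stmt1 :
    ∃ C : ℝ, 0 < C ∧ ∀ α β σ : ℝ, 0 < α → 0 < β → 0 < σ →
      β ^ 2 * Real.log (Real.exp 1 + σ) ≤
        C * α ^ 2 * σ ^ 2 + C * β ^ 2 * Real.log (Real.exp 1 + β / α) := by
  refine ⟨4, by norm_num, fun α β σ hα hβ hσ => ?_⟩
  have he : (0:ℝ) < Real.exp 1 := Real.exp_pos 1
  have he1 : (1:ℝ) ≤ Real.exp 1 := Real.one_le_exp (by norm_num)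
  have he3 : Real.exp 1 ≤ 3 := by
    have := Real.exp_one_lt_d9
    linarith
  have hba : 0 < β / α := div_pos hβ hα
  have hab : 0 < α * σ / β := div_pos (mul_pos hα hσ) hβ
  have h1 : 0 < Real.exp 1 + β / α := by positivity
  have h2 : 0 < Real.exp 1 + α * σ / β := by positivity
  have hkey : (β / α) * (α * σ / β) = σ := by field_simp
  have hprod : Real.exp 1 + σ ≤ (Real.exp 1 + β / α) * (Real.exp 1 + α * σ / β) := by
    nlinarith [mul_pos he hba, mul_pos he hab]
  have hlog : Real.log (Real.exp 1 + σ) ≤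
      Real.log (Real.exp 1 + β / α) + Real.log (Real.exp 1 + α * σ / β) := by
    rw [← Real.log_mul h1.ne' h2.ne']
    exact Real.log_le_log (by positivity) hprod
  have h3 : Real.log (Real.exp 1 + α * σ / β) ≤ Real.exp 1 + α * σ / β - 1 :=
    Real.log_le_sub_one_of_pos h2
  have h4 : 1 ≤ Real.log (Real.exp 1 + β / α) := by
    exact (Real.le_log_iff_exp_le h1).mpr (by linarith)
  have hconv : β ^ 2 * (α * σ / β) = α * σ * β := by field_simp
  have hb2 : 0 < β ^ 2 := by positivity
  nlinarith [sq_nonneg (α * σ - β), mul_le_mul_of_nonneg_left hlog hb2.le,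
    mul_le_mul_of_nonneg_left h3 hb2.le, mul_le_mul_of_nonneg_left h4 hb2.le,
    mul_le_mul_of_nonneg_left he3 hb2.le]
end
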